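/- Let n ≥ 1, let λ be a partition of n, and let c, d be functions from the cells of λ to ℕ. Suppose there exists a linear order ⪯ on ℕ × ℕ such that the filling of λ given by b ↦ (c(b), d(b)) is semistandard with respect to ⪯, i.e. weakly ⪯-increasing from left to right along each row and strictly ⪯-increasing from bottom to top along each column. Then for every standard Young tableau T ∈ SYT(λ), the coefficient of the monomial x_T^c y_T^d in F_T^{c,d} is nonzero; in particular F_T^{c,d} ≠ 0 in ℂ[𝐱,𝐲]. -/

import Mathlib

open MvPolynomial

noncomputable section

/-- The polynomial ring `ℂ[x₁,…,xₙ,y₁,…,yₙ]`; variable `Sum.inl i` is `xᵢ`,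
variable `Sum.inr i` is `yᵢ`. -/
abbrev PolyXY (n : ℕ) : Type := MvPolynomial (Fin n ⊕ Fin n) ℂ

/-- The diagonal action of `π ∈ Sₙ`: `π · f = f(x_{π(1)},…,x_{π(n)},y_{π(1)},…,y_{π(n)})`. -/
def diagAct {n : ℕ} (π : Equiv.Perm (Fin n)) (f : PolyXY n) : PolyXY n :=
  rename (Sum.map ⇑π ⇑π) f
/-- The cells of a Young diagram (French notation: a cell `(r, c)` lies in row `r`
counted from the bottom starting at `0`, and column `c` starting at `0`). -/
abbrev Cell (lam : YoungDiagram) : Type := {x // x ∈ lam.cells}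

/-- A bijective filling of the cells of `lam` with the `n` values (value `j : Fin n`
represents the entry `j+1`). -/
abbrev Tab (lam : YoungDiagram) (n : ℕ) : Type := Cell lam ≃ Fin n

def cellRow {lam : YoungDiagram} (b : Cell lam) : ℕ := b.1.1

def cellCol {lam : YoungDiagram} (b : Cell lam) : ℕ := b.1.2

/-- A filling is standard if entries increase left to right along rows and increase
up columns. -/
def IsSYT {lam : YoungDiagram} {n : ℕ} (T : Tab lam n) : Prop :=
  (∀ a b : Cell lam, cellRow a = cellRow b → cellCol a < cellCol b → T a < T b) ∧
  (∀ a b : Cell lam, cellCol a = cellCol b → cellRow a < cellRow b → T a < T b)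

/-- The row group `R(T)`: permutations sending each entry of `T` to an entry in the
same row. -/
def rowGroup {lam : YoungDiagram} {n : ℕ} (T : Tab lam n) : Finset (Equiv.Perm (Fin n)) :=
  Finset.univ.filter fun π => ∀ b : Cell lam, cellRow (T.symm (π (T b))) = cellRow b

/-- The column group `C(T)`: permutations sending each entry of `T` to an entry in the
same column. -/
def colGroup {lam : YoungDiagram} {n : ℕ} (T : Tab lam n) : Finset (Equiv.Perm (Fin n)) :=
  Finset.univ.filter fun π => ∀ b : Cell lam, cellCol (T.symm (π (T b))) = cellCol b

/-- The monomial `x_T^c y_T^d = ∏_{b ∈ λ} x_{T(b)}^{c(b)} y_{T(b)}^{d(b)}`. -/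
def tabMonomial {lam : YoungDiagram} {n : ℕ} (T : Tab lam n) (c d : Cell lam → ℕ) :
    PolyXY n :=
  ∏ b : Cell lam, (X (Sum.inl (T b)) ^ c b * X (Sum.inr (T b)) ^ d b)

/-- The higher Specht polynomial `F_T^{c,d} = ε_T(x_T^c y_T^d)`, where
`ε_T = Σ_{τ∈C(T)} Σ_{σ∈R(T)} sgn(τ)·τσ`. -/
def FTcd {lam : YoungDiagram} {n : ℕ} (T : Tab lam n) (c d : Cell lam → ℕ) : PolyXY n :=
  ∑ τ ∈ colGroup T, ∑ σ ∈ rowGroup T,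
    ((Equiv.Perm.sign τ : ℤ) : ℂ) • diagAct (τ * σ) (tabMonomial T c d)

lemma prod_monomial {ι σ R : Type*} [CommSemiring R] (s : Finset ι) (g : ι → (σ →₀ ℕ)) :
    ∏ i ∈ s, (MvPolynomial.monomial (g i) (1 : R)) = MvPolynomial.monomial (∑ i ∈ s, g i) 1 := by
  induction s using Finset.cons_induction with
  | empty => simp
  | cons a s ha ih =>
    rw [Finset.prod_cons, Finset.sum_cons, ih, MvPolynomial.monomial_mul, one_mul]


section AuxMain

variable {lam : YoungDiagram} {n : ℕ}

lemma tabMonomial_eq (T : Tab lam n) (c d : Cell lam → ℕ) :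
    tabMonomial T c d = monomial
      (Finsupp.equivFunOnFinite.symm
        (Sum.elim (fun j : Fin n => c (T.symm j)) (fun j : Fin n => d (T.symm j)))) 1 := by
  classical
  have h1 : ∀ b : Cell lam, (X (Sum.inl (T b)) ^ c b * X (Sum.inr (T b)) ^ d b : PolyXY n)
      = monomial (Finsupp.single (Sum.inl (T b)) (c b) + Finsupp.single (Sum.inr (T b)) (d b)) 1 := by
    intro b
    rw [X_pow_eq_monomial, X_pow_eq_monomial, monomial_mul, one_mul]
  rw [tabMonomial]
  rw [Finset.prod_congr rfl (fun b _ => h1 b)]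
  rw [prod_monomial]
  have hfs : (∑ b : Cell lam, (Finsupp.single (Sum.inl (T b)) (c b) + Finsupp.single (Sum.inr (T b)) (d b)))
      = (Finsupp.equivFunOnFinite.symm
        (Sum.elim (fun j : Fin n => c (T.symm j)) (fun j : Fin n => d (T.symm j)))
        : (Fin n ⊕ Fin n) →₀ ℕ) := by
    ext v
    rw [Finsupp.coe_equivFunOnFinite_symm]
    rw [Finsupp.finset_sum_apply]
    cases v with
    | inl j =>
      have h2 : ∀ b : Cell lam,
          ((Finsupp.single (Sum.inl (T b)) (c b) + Finsupp.single (Sum.inr (T b)) (d b) :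
            (Fin n ⊕ Fin n) →₀ ℕ))
            (Sum.inl j) = if b = T.symm j then c b else 0 := by
        intro b
        rw [Finsupp.add_apply, Finsupp.single_apply, Finsupp.single_apply]
        simp only [reduceCtorEq, if_false, add_zero]
        congr 1
        simp [Sum.inl.injEq, Equiv.apply_eq_iff_eq_symm_apply]
      rw [Finset.sum_congr rfl (fun b _ => h2 b), Finset.sum_ite_eq' Finset.univ]
      simp
    | inr j =>
      have h2 : ∀ b : Cell lam,
          ((Finsupp.single (Sum.inl (T b)) (c b) + Finsupp.single (Sum.inr (T b)) (d b) :
            (Fin n ⊕ Fin n) →₀ ℕ))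
            (Sum.inr j) = if b = T.symm j then d b else 0 := by
        intro b
        rw [Finsupp.add_apply, Finsupp.single_apply, Finsupp.single_apply]
        simp only [reduceCtorEq, if_false, zero_add]
        congr 1
        simp [Sum.inr.injEq, Equiv.apply_eq_iff_eq_symm_apply]
      rw [Finset.sum_congr rfl (fun b _ => h2 b), Finset.sum_ite_eq' Finset.univ]
      simp

  rw [hfs]

end AuxMain

section PermAux

variable {β : Type*} [Fintype β] [DecidableEq β]

lemma movedEmpty (t : Equiv.Perm β) (h : (Finset.univ.filter fun x => t x ≠ x) = ∅) : t = 1 := by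
  ext x
  by_contra hx
  have : x ∈ Finset.univ.filter fun x => t x ≠ x := by
    simp only [Finset.mem_filter, Finset.mem_univ, true_and]
    simpa using hx
  simp [h] at this

lemma phi_lt (row col m : β → ℕ)
    (hinj : ∀ x y : β, col x = col y → row x = row y → x = y)
    (hmono : ∀ x y : β, col x = col y → row x < row y → m x < m y) :
    ∀ (N : ℕ) (t : Equiv.Perm β), (∀ x, col (t x) = col x) → t ≠ 1 →
      (Finset.univ.filter fun x => t x ≠ x).card ≤ N →
      ∑ x, (row x : ℤ) * m (t x) < ∑ x, (row x : ℤ) * m x := by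
  intro N
  induction N with
  | zero =>
    intro t ht hne hcard
    exact absurd (movedEmpty t (Finset.card_eq_zero.mp (Nat.le_zero.mp hcard))) hne
  | succ N ih =>
    intro t ht hne hcard
    have hMvne : (Finset.univ.filter fun x => t x ≠ x).Nonempty := by
      rcases Finset.eq_empty_or_nonempty (Finset.univ.filter fun x => t x ≠ x) with h | h
      · exact absurd (movedEmpty t h) hne
      · exact h
    obtain ⟨x₀, hx₀mem, hmax⟩ := Finset.exists_max_image _ row hMvne
    have hx₀ : t x₀ ≠ x₀ := (Finset.mem_filter.mp hx₀mem).2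
    set y := t.symm x₀ with hy
    have hty : t y = x₀ := t.apply_symm_apply x₀
    have hyne : y ≠ x₀ := fun h => hx₀ (h ▸ hty)
    have hymoved : t y ≠ y := by rw [hty]; exact Ne.symm hyne
    have hymem : y ∈ Finset.univ.filter fun x => t x ≠ x :=
      Finset.mem_filter.mpr ⟨Finset.mem_univ _, hymoved⟩
    have hcoly : col y = col x₀ := by rw [← hty]; exact (ht y).symm
    have hrowy : row y < row x₀ :=
      lt_of_le_of_ne (hmax y hymem) (fun h => hyne (hinj _ _ hcoly h))
    have htx₀moved : t (t x₀) ≠ t x₀ := fun h => hx₀ (t.injective h)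
    have htx₀mem : t x₀ ∈ Finset.univ.filter fun x => t x ≠ x :=
      Finset.mem_filter.mpr ⟨Finset.mem_univ _, htx₀moved⟩
    have hcoltx₀ : col (t x₀) = col x₀ := ht x₀
    have hrowtx₀ : row (t x₀) < row x₀ :=
      lt_of_le_of_ne (hmax _ htx₀mem) (fun h => hx₀ (hinj _ _ hcoltx₀ h))
    have hmlt : m (t x₀) < m x₀ := hmono _ _ hcoltx₀ hrowtx₀
    set t' : Equiv.Perm β := Equiv.swap x₀ (t x₀) * t with ht'def
    have ht'x₀ : t' x₀ = x₀ := by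
      simp [ht'def, Equiv.Perm.mul_apply, Equiv.swap_apply_right]
    have ht'y : t' y = t x₀ := by
      simp [ht'def, Equiv.Perm.mul_apply, hty, Equiv.swap_apply_left]
    have ht'other : ∀ z, z ≠ x₀ → z ≠ y → t' z = t z := by
      intro z hz1 hz2
      have h1 : t z ≠ x₀ := fun h => hz2 (by rw [← hty] at h; exact t.injective h)
      have h2 : t z ≠ t x₀ := fun h => hz1 (t.injective h)
      simp [ht'def, Equiv.Perm.mul_apply, Equiv.swap_apply_of_ne_of_ne h1 h2]
    have ht'col : ∀ z, col (t' z) = col z := by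
      intro z
      rcases eq_or_ne z x₀ with rfl | h1
      · rw [ht'x₀]
      · rcases eq_or_ne z y with rfl | h2
        · rw [ht'y, hcoltx₀, ← hcoly]
        · rw [ht'other z h1 h2]; exact ht z
    have hsub : (Finset.univ.filter fun z => t' z ≠ z) ⊆
        (Finset.univ.filter fun x => t x ≠ x).erase x₀ := by
      intro z hz
      have hz' : t' z ≠ z := (Finset.mem_filter.mp hz).2
      have hzx₀ : z ≠ x₀ := by rintro rfl; exact hz' ht'x₀
      rcases eq_or_ne z y with rfl | h2
      · exact Finset.mem_erase.mpr ⟨hzx₀, hymem⟩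
      · refine Finset.mem_erase.mpr ⟨hzx₀, Finset.mem_filter.mpr ⟨Finset.mem_univ _, ?_⟩⟩
        rw [← ht'other z hzx₀ h2]; exact hz'
    have hcard' : (Finset.univ.filter fun z => t' z ≠ z).card ≤ N := by
      have h1 := Finset.card_le_card hsub
      have h2 : ((Finset.univ.filter fun x => t x ≠ x).erase x₀).card
          = (Finset.univ.filter fun x => t x ≠ x).card - 1 :=
        Finset.card_erase_of_mem hx₀mem
      have h3 : 0 < (Finset.univ.filter fun x => t x ≠ x).card :=
        Finset.card_pos.mpr ⟨x₀, hx₀mem⟩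
      omega
    have hΦ : ∑ x, (row x : ℤ) * m (t x) < ∑ x, (row x : ℤ) * m (t' x) := by
      have hsplit : ∀ (u : β → β), ∑ x, (row x : ℤ) * m (u x)
          = ∑ x ∈ Finset.univ \ ({x₀, y} : Finset β), (row x : ℤ) * m (u x)
            + ∑ x ∈ ({x₀, y} : Finset β), (row x : ℤ) * m (u x) :=
        fun u => (Finset.sum_sdiff (Finset.subset_univ _)).symm
      rw [hsplit (⇑t), hsplit (⇑t')]
      have heq : ∑ x ∈ Finset.univ \ ({x₀, y} : Finset β), (row x : ℤ) * m (t x)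
          = ∑ x ∈ Finset.univ \ ({x₀, y} : Finset β), (row x : ℤ) * m (t' x) := by
        apply Finset.sum_congr rfl
        intro z hz
        have h := Finset.mem_sdiff.mp hz
        simp only [Finset.mem_insert, Finset.mem_singleton, not_or] at h
        rw [ht'other z h.2.1 h.2.2]
      rw [heq]
      apply add_lt_add_right
      rw [Finset.sum_pair (Ne.symm hyne), Finset.sum_pair (Ne.symm hyne)]
      rw [ht'x₀, ht'y, hty]
      have c1 : (row y : ℤ) < row x₀ := by exact_mod_cast hrowy
      have c2 : (m (t x₀) : ℤ) < m x₀ := by exact_mod_cast hmlt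
      nlinarith
    rcases eq_or_ne t' 1 with h1 | h1
    · have : ∑ x, (row x : ℤ) * m (t' x) = ∑ x, (row x : ℤ) * m x := by
        rw [h1]; simp
      rw [this] at hΦ; exact hΦ
    · exact hΦ.trans (ih t' ht'col h1 hcard')

lemma keyPerm (row col m : β → ℕ)
    (hinj : ∀ x y : β, col x = col y → row x = row y → x = y)
    (hmono : ∀ x y : β, col x = col y → row x < row y → m x < m y)
    (t s : Equiv.Perm β)
    (ht : ∀ x, col (t x) = col x)
    (hs : ∀ x, row (s x) = row x)
    (hrel : ∀ x, m (t x) = m (s x)) : t = 1 := by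
  by_contra hne
  have h1 : ∑ x, (row x : ℤ) * m (t x) = ∑ x, (row x : ℤ) * m x := by
    have e1 : ∑ x, (row x : ℤ) * m (t x) = ∑ x, (row x : ℤ) * m (s x) := by
      apply Finset.sum_congr rfl; intro x _; rw [hrel]
    have e2 : ∑ x, (row x : ℤ) * m (s x) = ∑ x, (row x : ℤ) * m x := by
      have e3 := Equiv.sum_comp s (fun z => (row (s.symm z) : ℤ) * m z)
      have e5 : ∀ z : β, (row (s.symm z) : ℤ) * m z = (row z : ℤ) * m z := by
        intro z
        have h := hs (s.symm z)
        rw [Equiv.apply_symm_apply] at h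
        rw [h]
      calc ∑ x, (row x : ℤ) * m (s x) = ∑ x, (row (s.symm (s x)) : ℤ) * m (s x) := by
            apply Finset.sum_congr rfl; intro x _; rw [Equiv.symm_apply_apply]
        _ = ∑ z, (row (s.symm z) : ℤ) * m z := e3
        _ = ∑ z, (row z : ℤ) * m z := by apply Finset.sum_congr rfl; intro z _; rw [e5]
    exact e1.trans e2
  exact absurd h1 (ne_of_lt (phi_lt row col m hinj hmono _ t ht hne le_rfl))

end PermAux

theorem stmt8 (n : ℕ) (hn : 1 ≤ n)
    (lam : YoungDiagram) (hlam : lam.card = n)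
    (c d : Cell lam → ℕ)
    (r : ℕ × ℕ → ℕ × ℕ → Prop) (hr : IsLinearOrder (ℕ × ℕ) r)
    (hrow : ∀ a b : Cell lam, cellRow a = cellRow b → cellCol a ≤ cellCol b →
      r (c a, d a) (c b, d b))
    (hcol : ∀ a b : Cell lam, cellCol a = cellCol b → cellRow a < cellRow b →
      r (c a, d a) (c b, d b) ∧ (c a, d a) ≠ (c b, d b))
    (T : Tab lam n) (hT : IsSYT T) :
    MvPolynomial.coeff
      (Finsupp.equivFunOnFinite.symm
        (Sum.elim (fun j : Fin n => c (T.symm j)) (fun j : Fin n => d (T.symm j))))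
      (FTcd T c d) ≠ 0 ∧
    FTcd T c d ≠ 0 := by
  classical
  haveI := hr
  set E : (Fin n ⊕ Fin n) →₀ ℕ :=
    Finsupp.equivFunOnFinite.symm
      (Sum.elim (fun j : Fin n => c (T.symm j)) (fun j : Fin n => d (T.symm j))) with hEdef
  have hEl : ∀ j : Fin n, E (Sum.inl j) = c (T.symm j) := fun j => rfl
  have hEr : ∀ j : Fin n, E (Sum.inr j) = d (T.symm j) := fun j => rfl
  have hmapeq : ∀ π : Equiv.Perm (Fin n),
      Finsupp.mapDomain (Sum.map ⇑π ⇑π) E = Finsupp.equivMapDomain (Equiv.sumCongr π π) E := by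
    intro π
    rw [Finsupp.equivMapDomain_eq_mapDomain]
    congr 1
  have hcond_iff : ∀ π : Equiv.Perm (Fin n),
      (Finsupp.mapDomain (Sum.map ⇑π ⇑π) E = E) ↔
      (∀ j : Fin n, c (T.symm (π j)) = c (T.symm j) ∧ d (T.symm (π j)) = d (T.symm j)) := by
    intro π
    rw [hmapeq π]
    constructor
    · intro h j
      constructor
      · have h1 := DFunLike.congr_fun h (Sum.inl (π j))
        rw [Finsupp.equivMapDomain_apply, Equiv.sumCongr_symm, Equiv.sumCongr_apply] at h1
        simp only [Sum.map_inl, Equiv.symm_apply_apply] at h1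
        rw [hEl, hEl] at h1
        exact h1.symm
      · have h1 := DFunLike.congr_fun h (Sum.inr (π j))
        rw [Finsupp.equivMapDomain_apply, Equiv.sumCongr_symm, Equiv.sumCongr_apply] at h1
        simp only [Sum.map_inr, Equiv.symm_apply_apply] at h1
        rw [hEr, hEr] at h1
        exact h1.symm
    · intro h
      ext v
      rw [Finsupp.equivMapDomain_apply, Equiv.sumCongr_symm, Equiv.sumCongr_apply]
      cases v with
      | inl j =>
        simp only [Sum.map_inl]
        rw [hEl, hEl]
        have h1 := (h (π.symm j)).1
        rw [Equiv.apply_symm_apply] at h1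
        exact h1.symm
      | inr j =>
        simp only [Sum.map_inr]
        rw [hEr, hEr]
        have h1 := (h (π.symm j)).2
        rw [Equiv.apply_symm_apply] at h1
        exact h1.symm
  -- the key combinatorial step
  have hτkey : ∀ τ ∈ colGroup T, ∀ σ ∈ rowGroup T,
      Finsupp.mapDomain (Sum.map ⇑(τ * σ) ⇑(τ * σ)) E = E → τ = 1 := by
    intro τ hτ σ hσ hcnd
    have hτ' : ∀ b : Cell lam, cellCol (T.symm (τ (T b))) = cellCol b :=
      (Finset.mem_filter.mp hτ).2
    have hσ' : ∀ b : Cell lam, cellRow (T.symm (σ (T b))) = cellRow b :=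
      (Finset.mem_filter.mp hσ).2
    have hc' := (hcond_iff (τ * σ)).mp hcnd
    set L : Cell lam → ℕ × ℕ := fun b => (c b, d b) with hLdef
    set M : ℕ × ℕ → ℕ :=
      fun v => (Finset.univ.filter fun b' : Cell lam => r (L b') v ∧ L b' ≠ v).card with hMdef
    set tC : Equiv.Perm (Cell lam) := (T.trans τ).trans T.symm with htCdef
    set sC : Equiv.Perm (Cell lam) := (T.trans σ).trans T.symm with hsCdef
    have htCapp : ∀ b, tC b = T.symm (τ (T b)) := fun b => rfl
    have hsCapp : ∀ b, sC b = T.symm (σ (T b)) := fun b => rfl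
    have hsCsymm : ∀ x, sC.symm x = T.symm (σ.symm (T x)) := by
      intro x
      apply sC.injective
      rw [Equiv.apply_symm_apply, hsCapp]
      simp
    have hinj : ∀ x y : Cell lam, cellCol x = cellCol y → cellRow x = cellRow y → x = y := by
      intro x y h1 h2
      exact Subtype.ext (Prod.ext h2 h1)
    have hmono : ∀ x y : Cell lam, cellCol x = cellCol y → cellRow x < cellRow y →
        M (L x) < M (L y) := by
      intro x y h1 h2
      obtain ⟨hrxy, hnexy⟩ := hcol x y h1 h2
      apply Finset.card_lt_card
      have hsubs : (Finset.univ.filter fun b' : Cell lam => r (L b') (L x) ∧ L b' ≠ L x)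
          ⊆ (Finset.univ.filter fun b' : Cell lam => r (L b') (L y) ∧ L b' ≠ L y) := by
        intro b hb
        obtain ⟨hbu, hrb, hneb⟩ := Finset.mem_filter.mp hb
        refine Finset.mem_filter.mpr ⟨Finset.mem_univ _, ?_, ?_⟩
        · exact _root_.trans hrb hrxy
        · intro hEq
          exact hneb (_root_.antisymm hrb (hEq ▸ hrxy))
      rw [Finset.ssubset_iff_of_subset hsubs]
      refine ⟨x, Finset.mem_filter.mpr ⟨Finset.mem_univ _, hrxy, hnexy⟩, ?_⟩
      intro hx
      exact (Finset.mem_filter.mp hx).2.2 rfl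
    have hsrow : ∀ x, cellRow (sC.symm x) = cellRow x := by
      intro x
      have h := hσ' (sC.symm x)
      rw [← hsCapp] at h
      rw [Equiv.apply_symm_apply] at h
      exact h.symm
    have hrel : ∀ x : Cell lam, M (L (tC x)) = M (L (sC.symm x)) := by
      intro x
      have h := hc' (σ.symm (T x))
      have h1 : (τ * σ) (σ.symm (T x)) = τ (T x) := by
        simp [Equiv.Perm.mul_apply]
      rw [h1] at h
      have hLx : L (tC x) = L (sC.symm x) := by
        rw [htCapp, hsCsymm]
        exact Prod.ext h.1 h.2
      rw [hLx]
    have htC1 : tC = 1 :=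
      keyPerm cellRow cellCol (fun b => M (L b)) hinj hmono tC sC.symm
        (fun x => hτ' x) hsrow hrel
    ext j
    have h := congrArg (fun e : Equiv.Perm (Cell lam) => e (T.symm j)) htC1
    simp only [Equiv.Perm.one_apply] at h
    have h2 : T.symm (τ (T (T.symm j))) = T.symm j := h
    rw [Equiv.apply_symm_apply] at h2
    have h3 : τ j = j := T.symm.injective h2
    exact congrArg Fin.val h3
  -- 1 belongs to both groups and satisfies the condition
  have h1col : (1 : Equiv.Perm (Fin n)) ∈ colGroup T := by
    rw [colGroup, Finset.mem_filter]
    exact ⟨Finset.mem_univ _, fun b => by simp⟩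
  have h1row : (1 : Equiv.Perm (Fin n)) ∈ rowGroup T := by
    rw [rowGroup, Finset.mem_filter]
    exact ⟨Finset.mem_univ _, fun b => by simp⟩
  have hcnd1 : Finsupp.mapDomain (Sum.map ⇑(1 : Equiv.Perm (Fin n)) ⇑(1 : Equiv.Perm (Fin n))) E = E := by
    have hid : (Sum.map ⇑(1 : Equiv.Perm (Fin n)) ⇑(1 : Equiv.Perm (Fin n))) = id := by
      funext v; cases v <;> rfl
    rw [hid, Finsupp.mapDomain_id]
  -- the coefficient computation
  have hmon : tabMonomial T c d = monomial E 1 := tabMonomial_eq T c d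
  have hco : MvPolynomial.coeff E (FTcd T c d) =
      (((rowGroup T).filter
        (fun σ : Equiv.Perm (Fin n) => Finsupp.mapDomain (Sum.map ⇑σ ⇑σ) E = E)).card : ℂ) := by
    rw [FTcd, MvPolynomial.coeff_sum]
    have step1 : ∀ τ ∈ colGroup T,
        MvPolynomial.coeff E (∑ σ ∈ rowGroup T,
          ((Equiv.Perm.sign τ : ℤ) : ℂ) • diagAct (τ * σ) (tabMonomial T c d))
        = if τ = 1 then
            ∑ σ ∈ rowGroup T,
              (if Finsupp.mapDomain (Sum.map ⇑σ ⇑σ) E = E then (1 : ℂ) else 0)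
          else 0 := by
      intro τ hτ
      rw [MvPolynomial.coeff_sum]
      have step2 : ∀ σ ∈ rowGroup T,
          MvPolynomial.coeff E (((Equiv.Perm.sign τ : ℤ) : ℂ) • diagAct (τ * σ) (tabMonomial T c d))
          = if τ = 1 then
              (if Finsupp.mapDomain (Sum.map ⇑σ ⇑σ) E = E then (1 : ℂ) else 0)
            else 0 := by
        intro σ hσ
        rw [MvPolynomial.coeff_smul, hmon, diagAct, rename_monomial, MvPolynomial.coeff_monomial,
          smul_eq_mul]
        by_cases hcnd : Finsupp.mapDomain (Sum.map ⇑(τ * σ) ⇑(τ * σ)) E = E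
        · have hτ1 : τ = 1 := hτkey τ hτ σ hσ hcnd
          subst hτ1
          rw [one_mul] at hcnd
          simp [hcnd]
        · rw [if_neg hcnd, mul_zero]
          by_cases hτ1 : τ = 1
          · subst hτ1
            rw [one_mul] at hcnd
            simp [hcnd]
          · simp [hτ1]
      rw [Finset.sum_congr rfl step2]
      by_cases hτ1 : τ = 1
      · simp [hτ1]
      · simp [hτ1]
    rw [Finset.sum_congr rfl step1]
    rw [Finset.sum_ite_eq' (colGroup T) 1]
    rw [if_pos h1col]
    rw [Finset.sum_boole]
  have hpos : 0 < ((rowGroup T).filter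
      (fun σ : Equiv.Perm (Fin n) => Finsupp.mapDomain (Sum.map ⇑σ ⇑σ) E = E)).card :=
    Finset.card_pos.mpr ⟨1, Finset.mem_filter.mpr ⟨h1row, hcnd1⟩⟩
  constructor
  · rw [hco]
    exact_mod_cast Nat.cast_ne_zero.mpr hpos.ne'
  · intro h0
    have hz : MvPolynomial.coeff E (FTcd T c d) = 0 := by rw [h0, MvPolynomial.coeff_zero]
    rw [hco] at hz
    exact (Nat.cast_ne_zero.mpr hpos.ne') hz
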